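/- Let k > 0, h ∈ ℝ, and let u ∈ C⁴([0,1]) be not identically zero, satisfying the linear equation u''''(x) − h·u''(x) + k·u(x) = 0 for all x ∈ [0,1] together with the hinged boundary conditions u(0) = u(1) = u''(0) = u''(1) = 0. Then h ≤ −2√k, the set S = {n integer, n ≥ 1 : n⁴π⁴ + h·n²π² + k = 0} is nonempty (and has at most two elements), and there exist reals a_n (n ∈ S) such that u(x) = Σ_{n∈S} a_n·sin(nπx) for all x ∈ [0,1]. -/

import Mathlib

set_option maxHeartbeats 1000000

open Real Set intervalIntegral MeasureTheory

lemma sq_int_pos {f : ℝ → ℝ} (hf : ContinuousOn f (Icc 0 1)) {x₀ : ℝ}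
    (hx₀ : x₀ ∈ Icc (0:ℝ) 1) (hfx : f x₀ ≠ 0) :
    0 < ∫ x in (0:ℝ)..1, (f x)^2 := by
  obtain ⟨δ, hδ, hδ'⟩ := Metric.continuousWithinAt_iff.mp (hf x₀ hx₀) |f x₀| (abs_pos.mpr hfx)
  set c := max 0 (x₀ - δ/2) with hc
  set d := min 1 (x₀ + δ/2) with hd
  have hc0 : 0 ≤ c := le_max_left _ _
  have hd1 : d ≤ 1 := min_le_left _ _
  have hc2 : x₀ - δ/2 ≤ c := le_max_right _ _
  have hd2 : d ≤ x₀ + δ/2 := min_le_right _ _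
  have hcd : c < d := by
    have h0 := hx₀.1; have h1 := hx₀.2
    rcases max_cases 0 (x₀ - δ/2) with ⟨h,h'⟩|⟨h,h'⟩ <;>
      rcases min_cases 1 (x₀ + δ/2) with ⟨g,g'⟩|⟨g,g'⟩ <;> rw [hc, hd, h, g] <;> nlinarith
  have hsub : Icc c d ⊆ Icc (0:ℝ) 1 := Icc_subset_Icc hc0 hd1
  have hne : ∀ x ∈ Icc c d, 0 < (f x)^2 := by
    intro x hx
    have hdist : dist x x₀ < δ := by
      rw [Real.dist_eq, abs_lt]; have := hx.1; have := hx.2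
      constructor <;> nlinarith
    have := hδ' (hsub hx) hdist
    have hfx0 : f x ≠ 0 := by
      intro h0; rw [h0, dist_zero_left] at this; exact absurd this (lt_irrefl _)
    positivity
  have hint : ∀ a b : ℝ, a ∈ Icc (0:ℝ) 1 → b ∈ Icc (0:ℝ) 1 →
      IntervalIntegrable (fun x => (f x)^2) volume a b := by
    intro a b ha hb
    apply ContinuousOn.intervalIntegrable
    apply (hf.mono _).pow
    intro x hx
    rcases le_total a b with hab | hab
    · rw [uIcc_of_le hab] at hx; exact ⟨ha.1.trans hx.1, hx.2.trans hb.2⟩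
    · rw [uIcc_of_ge hab] at hx; exact ⟨hb.1.trans hx.1, hx.2.trans ha.2⟩
  have hmid : 0 < ∫ x in c..d, (f x)^2 := by
    apply intervalIntegral_pos_of_pos_on (hint c d ⟨hc0, hcd.le.trans hd1⟩ ⟨hc0.trans hcd.le, hd1⟩)
      (fun x hx => hne x ⟨hx.1.le, hx.2.le⟩) hcd
  have h1 : 0 ≤ ∫ x in (0:ℝ)..c, (f x)^2 :=
    intervalIntegral.integral_nonneg hc0 (fun x _ => sq_nonneg _)
  have h2 : 0 ≤ ∫ x in d..1, (f x)^2 :=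
    intervalIntegral.integral_nonneg hd1 (fun x _ => sq_nonneg _)
  have hsplit : (∫ x in (0:ℝ)..1, (f x)^2) =
      (∫ x in (0:ℝ)..c, (f x)^2) + (∫ x in c..d, (f x)^2) + (∫ x in d..1, (f x)^2) := by
    rw [integral_add_adjacent_intervals (hint 0 c (by norm_num) ⟨hc0, hcd.le.trans hd1⟩)
      (hint c d ⟨hc0, hcd.le.trans hd1⟩ ⟨hc0.trans hcd.le, hd1⟩),
      integral_add_adjacent_intervals (hint 0 d (by norm_num) ⟨hc0.trans hcd.le, hd1⟩)
      (hint d 1 ⟨hc0.trans hcd.le, hd1⟩ (by norm_num))]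
  rw [hsplit]; linarith


lemma hasDerivAt_sin_mul (ω t : ℝ) :
    HasDerivAt (fun x => Real.sin (ω*x)) (ω * Real.cos (ω*t)) t := by
  exact ((Real.hasDerivAt_sin (ω*t)).comp t ((hasDerivAt_id t).const_mul ω)).congr_deriv (by ring)

lemma hasDerivAt_cos_mul (ω t : ℝ) :
    HasDerivAt (fun x => Real.cos (ω*x)) (-(ω * Real.sin (ω*t))) t := by
  exact ((Real.hasDerivAt_cos (ω*t)).comp t ((hasDerivAt_id t).const_mul ω)).congr_deriv (by ring)

lemma hasDerivAt_mul_cos (ω t : ℝ) :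
    HasDerivAt (fun x => x * Real.cos (ω*x)) (Real.cos (ω*t) - ω * (t * Real.sin (ω*t))) t := by
  have := (hasDerivAt_id t).mul (hasDerivAt_cos_mul ω t)
  refine this.congr_deriv ?_
  simp only [id]
  ring

lemma hasDerivAt_mul_sin (ω t : ℝ) :
    HasDerivAt (fun x => x * Real.sin (ω*x)) (Real.sin (ω*t) + ω * (t * Real.cos (ω*t))) t := by
  have := (hasDerivAt_id t).mul (hasDerivAt_sin_mul ω t)
  refine this.congr_deriv ?_
  simp only [id]
  ring

lemma ode4_unique (h k : ℝ) (F G : ℝ → ℝ×ℝ×ℝ×ℝ)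
    (hF : ContinuousOn F (Icc 0 1))
    (hF' : ∀ t ∈ Ico (0:ℝ) 1, HasDerivWithinAt F
      ((F t).2.1, (F t).2.2.1, (F t).2.2.2, h * (F t).2.2.1 - k * (F t).1) (Ici t) t)
    (hG : ContinuousOn G (Icc 0 1))
    (hG' : ∀ t ∈ Ico (0:ℝ) 1, HasDerivWithinAt G
      ((G t).2.1, (G t).2.2.1, (G t).2.2.2, h * (G t).2.2.1 - k * (G t).1) (Ici t) t)
    (h0 : F 0 = G 0) : EqOn F G (Icc 0 1) := by
  set K : NNReal := ⟨1 + |h| + |k|, by positivity⟩ with hK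
  set v : ℝ → (ℝ×ℝ×ℝ×ℝ) → (ℝ×ℝ×ℝ×ℝ) :=
    fun _ p => (p.2.1, p.2.2.1, p.2.2.2, h * p.2.2.1 - k * p.1) with hv
  have hlip : ∀ t, LipschitzOnWith K (v t) univ := by
    intro t
    rw [lipschitzOnWith_univ]
    rw [lipschitzWith_iff_dist_le_mul]
    intro p q
    have hKc : (K : ℝ) = 1 + |h| + |k| := rfl
    have hd : 0 ≤ dist p q := dist_nonneg
    have h1 : dist p.1 q.1 ≤ dist p q := by
      rw [Prod.dist_eq]; exact le_max_left _ _
    have h2 : dist p.2 q.2 ≤ dist p q := by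
      rw [Prod.dist_eq]; exact le_max_right _ _
    have h21 : dist p.2.1 q.2.1 ≤ dist p q := le_trans (by rw [Prod.dist_eq]; exact le_max_left _ _) h2
    have h22 : dist p.2.2 q.2.2 ≤ dist p q := le_trans (by rw [Prod.dist_eq]; exact le_max_right _ _) h2
    have h221 : dist p.2.2.1 q.2.2.1 ≤ dist p q := le_trans (by rw [Prod.dist_eq]; exact le_max_left _ _) h22
    have h222 : dist p.2.2.2 q.2.2.2 ≤ dist p q := le_trans (by rw [Prod.dist_eq]; exact le_max_right _ _) h22
    have hlast : dist (h * p.2.2.1 - k * p.1) (h * q.2.2.1 - k * q.1) ≤ (|h| + |k|) * dist p q := by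
      rw [Real.dist_eq] at *
      have : h * p.2.2.1 - k * p.1 - (h * q.2.2.1 - k * q.1)
          = h * (p.2.2.1 - q.2.2.1) - k * (p.1 - q.1) := by ring
      rw [this]
      calc |h * (p.2.2.1 - q.2.2.1) - k * (p.1 - q.1)|
          ≤ |h * (p.2.2.1 - q.2.2.1)| + |k * (p.1 - q.1)| := abs_sub _ _
        _ = |h| * |p.2.2.1 - q.2.2.1| + |k| * |p.1 - q.1| := by rw [abs_mul, abs_mul]
        _ ≤ |h| * dist p q + |k| * dist p q := by
            apply add_le_add <;> apply mul_le_mul_of_nonneg_left _ (abs_nonneg _)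
            · exact h221
            · exact h1
        _ = (|h| + |k|) * dist p q := by ring
    have expand : dist (v t p) (v t q) = max (dist p.2.1 q.2.1) (max (dist p.2.2.1 q.2.2.1)
        (max (dist p.2.2.2 q.2.2.2) (dist (h*p.2.2.1 - k*p.1) (h*q.2.2.1 - k*q.1)))) := by
      simp [hv, Prod.dist_eq]
    rw [expand, hKc]
    apply max_le
    · nlinarith [abs_nonneg h, abs_nonneg k, hd]
    apply max_le
    · nlinarith [abs_nonneg h, abs_nonneg k, hd]
    apply max_le
    · nlinarith [abs_nonneg h, abs_nonneg k, hd]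
    · nlinarith [abs_nonneg h, abs_nonneg k, hd]
  exact ODE_solution_unique_of_mem_Icc_right (fun t _ => hlip t) hF
    (fun t ht => hF' t ht) (fun t _ => mem_univ _) hG (fun t ht => hG' t ht)
    (fun t _ => mem_univ _) h0

lemma sq_eq_sq_pos {a b : ℝ} (ha : 0 ≤ a) (hb : 0 < b) : a^2 = b^2 ↔ a = b := by
  constructor
  · intro e
    have hz : (a - b) * (a + b) = 0 := by linear_combination e
    rcases mul_eq_zero.mp hz with hz | hz
    · linarith
    · linarith
  · intro e; rw [e]

lemma final_part (k h : ℝ) (hk : 0 < k) (u : ℝ → ℝ)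
    (hne : ∃ x ∈ Icc (0:ℝ) 1, u x ≠ 0)
    (ω₁ ω₂ A B : ℝ) (hω₁ : 0 < ω₁) (hω₂ : 0 < ω₂)
    (hroot : ∀ μ : ℝ, μ^2 + h*μ + k = 0 ↔ (μ = ω₁^2 ∨ μ = ω₂^2))
    (hu : ∀ x ∈ Icc (0:ℝ) 1, u x = A * Real.sin (ω₁*x) + B * Real.sin (ω₂*x))
    (hAs : A * Real.sin ω₁ = 0) (hBs : B * Real.sin ω₂ = 0) :
    {n : ℕ | 1 ≤ n ∧ (n : ℝ)^4*π^4 + h*(n : ℝ)^2*π^2 + k = 0}.Nonempty ∧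
    {n : ℕ | 1 ≤ n ∧ (n : ℝ)^4*π^4 + h*(n : ℝ)^2*π^2 + k = 0}.Finite ∧
    {n : ℕ | 1 ≤ n ∧ (n : ℝ)^4*π^4 + h*(n : ℝ)^2*π^2 + k = 0}.ncard ≤ 2 ∧
    ∃ a : ℕ → ℝ, ∀ x ∈ Icc (0:ℝ) 1,
      u x = ∑ᶠ n ∈ {n : ℕ | 1 ≤ n ∧ (n : ℝ)^4*π^4 + h*(n : ℝ)^2*π^2 + k = 0},
        a n * Real.sin ((n : ℝ)*π*x) := by
  set S := {n : ℕ | 1 ≤ n ∧ (n : ℝ)^4*π^4 + h*(n : ℝ)^2*π^2 + k = 0} with hS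
  -- membership characterization
  have hmem : ∀ n : ℕ, n ∈ S ↔ 1 ≤ n ∧ ((n:ℝ)*π = ω₁ ∨ (n:ℝ)*π = ω₂) := by
    intro n
    have hnn : (0:ℝ) ≤ (n:ℝ)*π := by positivity
    have he : (n:ℝ)^4*π^4 + h*(n:ℝ)^2*π^2 + k = (((n:ℝ)*π)^2)^2 + h*((n:ℝ)*π)^2 + k := by ring
    constructor
    · rintro ⟨h1, h2⟩
      refine ⟨h1, ?_⟩
      rw [he] at h2
      rcases (hroot (((n:ℝ)*π)^2)).mp h2 with h3 | h3
      · exact Or.inl ((sq_eq_sq_pos hnn hω₁).mp h3)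
      · exact Or.inr ((sq_eq_sq_pos hnn hω₂).mp h3)
    · rintro ⟨h1, h2 | h2⟩
      · refine ⟨h1, ?_⟩
        rw [he]
        have := (hroot (((n:ℝ)*π)^2)).mpr (Or.inl (by rw [h2]))
        linear_combination this
      · refine ⟨h1, ?_⟩
        rw [he]
        have := (hroot (((n:ℝ)*π)^2)).mpr (Or.inr (by rw [h2]))
        linear_combination this
  -- from sin ω = 0 and ω > 0, get n : ℕ with n ≥ 1, n π = ω
  have hquant : ∀ ω : ℝ, 0 < ω → Real.sin ω = 0 → ∃ n : ℕ, 1 ≤ n ∧ (n:ℝ)*π = ω := by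
    intro ω hω hsin
    obtain ⟨m, hm⟩ := Real.sin_eq_zero_iff.mp hsin
    have hmpos : 0 < (m:ℝ) := by
      by_contra hcon
      push_neg at hcon
      nlinarith [Real.pi_pos]
    have hm0 : 0 < m := by exact_mod_cast hmpos
    refine ⟨m.toNat, by omega, ?_⟩
    rw [show ((m.toNat : ℕ) : ℝ) = ((m:ℤ) : ℝ) by exact_mod_cast Int.toNat_of_nonneg hm0.le]
    exact hm
  -- nontriviality
  have hAB : A ≠ 0 ∨ B ≠ 0 := by
    by_contra hcon
    push_neg at hcon
    obtain ⟨x₀, hx₀, hux₀⟩ := hne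
    apply hux₀
    rw [hu x₀ hx₀, hcon.1, hcon.2]
    ring
  -- nonemptiness
  have hSne : S.Nonempty := by
    rcases hAB with hA | hB
    · have hsin : Real.sin ω₁ = 0 := by
        rcases mul_eq_zero.mp hAs with hc | hc
        · exact absurd hc hA
        · exact hc
      obtain ⟨n, hn1, hn2⟩ := hquant ω₁ hω₁ hsin
      exact ⟨n, (hmem n).mpr ⟨hn1, Or.inl hn2⟩⟩
    · have hsin : Real.sin ω₂ = 0 := by
        rcases mul_eq_zero.mp hBs with hc | hc
        · exact absurd hc hB
        · exact hc
      obtain ⟨n, hn1, hn2⟩ := hquant ω₂ hω₂ hsin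
      exact ⟨n, (hmem n).mpr ⟨hn1, Or.inr hn2⟩⟩
  -- finiteness
  have hsub : S ⊆ {n : ℕ | (n:ℝ)*π = ω₁} ∪ {n : ℕ | (n:ℝ)*π = ω₂} := by
    intro n hn
    rcases ((hmem n).mp hn).2 with h1 | h1
    · exact Or.inl h1
    · exact Or.inr h1
  have hsing : ∀ ω : ℝ, {n : ℕ | (n:ℝ)*π = ω}.Subsingleton := by
    intro ω a ha b hb
    have : (a:ℝ) = (b:ℝ) := by
      have := ha.trans hb.symm
      exact mul_right_cancel₀ Real.pi_ne_zero this
    exact_mod_cast this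
  have hTfin : ({n : ℕ | (n:ℝ)*π = ω₁} ∪ {n : ℕ | (n:ℝ)*π = ω₂}).Finite :=
    ((hsing ω₁).finite).union ((hsing ω₂).finite)
  have hSfin : S.Finite := hTfin.subset hsub
  have hcard : S.ncard ≤ 2 := by
    calc S.ncard ≤ ({n : ℕ | (n:ℝ)*π = ω₁} ∪ {n : ℕ | (n:ℝ)*π = ω₂}).ncard :=
          Set.ncard_le_ncard hsub hTfin
    _ ≤ ({n : ℕ | (n:ℝ)*π = ω₁}).ncard + ({n : ℕ | (n:ℝ)*π = ω₂}).ncard := Set.ncard_union_le _ _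
    _ ≤ 1 + 1 := add_le_add
          ((Set.ncard_le_one ((hsing ω₁).finite)).mpr (fun a ha b hb => hsing ω₁ ha hb))
          ((Set.ncard_le_one ((hsing ω₂).finite)).mpr (fun a ha b hb => hsing ω₂ ha hb))
    _ = 2 := by norm_num
  refine ⟨hSne, hSfin, hcard, ?_⟩
  -- the representation
  refine ⟨fun n => (if (n:ℝ)*π = ω₁ then A else 0) + (if (n:ℝ)*π = ω₂ then B else 0), ?_⟩
  intro x hx
  rw [hu x hx, finsum_mem_eq_finite_toFinset_sum _ hSfin]
  have hsplit : ∀ n ∈ hSfin.toFinset,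
      ((if (n:ℝ)*π = ω₁ then A else 0) + (if (n:ℝ)*π = ω₂ then B else 0)) * Real.sin ((n:ℝ)*π*x)
      = (if (n:ℝ)*π = ω₁ then A * Real.sin ((n:ℝ)*π*x) else 0)
        + (if (n:ℝ)*π = ω₂ then B * Real.sin ((n:ℝ)*π*x) else 0) := by
    intro n _
    split_ifs <;> ring
  rw [Finset.sum_congr rfl hsplit, Finset.sum_add_distrib]
  have hgen : ∀ (ω C : ℝ), 0 < ω → C * Real.sin ω = 0 → (ω = ω₁ ∨ ω = ω₂) →
      (∑ n ∈ hSfin.toFinset, (if (n:ℝ)*π = ω then C * Real.sin ((n:ℝ)*π*x) else 0))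
        = C * Real.sin (ω*x) := by
    intro ω C hω hCs hωS
    by_cases hC : C = 0
    · rw [hC]
      simp
    · have hsin : Real.sin ω = 0 := by
        rcases mul_eq_zero.mp hCs with hc | hc
        · exact absurd hc hC
        · exact hc
      obtain ⟨n₀, hn₀1, hn₀2⟩ := hquant ω hω hsin
      have hn₀S : n₀ ∈ hSfin.toFinset := by
        rw [Set.Finite.mem_toFinset]
        apply (hmem n₀).mpr
        refine ⟨hn₀1, ?_⟩
        rcases hωS with hw | hw
        · exact Or.inl (by rw [hn₀2, hw])
        · exact Or.inr (by rw [hn₀2, hw])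
      rw [Finset.sum_eq_single_of_mem n₀ hn₀S]
      · rw [if_pos hn₀2, hn₀2]
      · intro b _ hbn
        rw [if_neg]
        intro hb
        exact hbn (hsing ω (by exact hb) (by exact hn₀2))
  rw [hgen ω₁ A hω₁ hAs (Or.inl rfl), hgen ω₂ B hω₂ hBs (Or.inr rfl)]

/-- A nontrivial `C⁴` solution of the linear problem
`u'''' - h u'' + k u = 0` on `[0,1]` with hinged boundary conditions forces
`h ≤ -2√k`; the set `S` of integers `n ≥ 1` with `n⁴π⁴ + h n²π² + k = 0` is
nonempty with at most two elements, and `u` is a combination of `sin(nπx)`,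
`n ∈ S`. -/
theorem stmt4 (k h : ℝ) (hk : 0 < k) (u : ℝ → ℝ)
    (hreg : ContDiffOn ℝ 4 u (Icc (0:ℝ) 1))
    (hne : ∃ x ∈ Icc (0:ℝ) 1, u x ≠ 0)
    (heq : ∀ x ∈ Icc (0:ℝ) 1,
      iteratedDerivWithin 4 u (Icc (0:ℝ) 1) x
        - h * iteratedDerivWithin 2 u (Icc (0:ℝ) 1) x + k * u x = 0)
    (hbc0 : u 0 = 0) (hbc1 : u 1 = 0)
    (hbc2 : iteratedDerivWithin 2 u (Icc (0:ℝ) 1) 0 = 0)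
    (hbc3 : iteratedDerivWithin 2 u (Icc (0:ℝ) 1) 1 = 0) :
    h ≤ -2 * Real.sqrt k ∧
    {n : ℕ | 1 ≤ n ∧ (n : ℝ)^4*π^4 + h*(n : ℝ)^2*π^2 + k = 0}.Nonempty ∧
    {n : ℕ | 1 ≤ n ∧ (n : ℝ)^4*π^4 + h*(n : ℝ)^2*π^2 + k = 0}.Finite ∧
    {n : ℕ | 1 ≤ n ∧ (n : ℝ)^4*π^4 + h*(n : ℝ)^2*π^2 + k = 0}.ncard ≤ 2 ∧
    ∃ a : ℕ → ℝ, ∀ x ∈ Icc (0:ℝ) 1,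
      u x = ∑ᶠ n ∈ {n : ℕ | 1 ≤ n ∧ (n : ℝ)^4*π^4 + h*(n : ℝ)^2*π^2 + k = 0},
        a n * Real.sin ((n : ℝ)*π*x) := by
  set I : Set ℝ := Icc (0:ℝ) 1 with hI
  have hud : UniqueDiffOn ℝ I := uniqueDiffOn_Icc zero_lt_one
  set D : ℕ → ℝ → ℝ := fun i => iteratedDerivWithin i u I with hD
  have hD0 : ∀ x, D 0 x = u x := by intro x; simp [hD]
  have hDd : ∀ i : ℕ, i < 4 → ∀ x ∈ I, HasDerivWithinAt (D i) (D (i+1) x) I x := by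
    intro i hi x hx
    have hdiff : DifferentiableOn ℝ (D i) I := by
      apply hreg.differentiableOn_iteratedDerivWithin _ hud
      exact_mod_cast hi
    have := (hdiff x hx).hasDerivWithinAt
    rwa [show D (i+1) x = derivWithin (D i) I x from congrFun iteratedDerivWithin_succ x]
  have hDc : ∀ i : ℕ, i ≤ 4 → ContinuousOn (D i) I := by
    intro i hi
    apply hreg.continuousOn_iteratedDerivWithin _ hud
    exact_mod_cast hi
  have hple : h ≤ -2 * Real.sqrt k := by
    have huIcc : uIcc (0:ℝ) 1 = I := uIcc_of_le zero_le_one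
    -- integrability of products
    have hig : ∀ f g : ℝ → ℝ, ContinuousOn f I → ContinuousOn g I →
        IntervalIntegrable (fun x => f x * g x) volume 0 1 := by
      intro f g hf hg
      apply ContinuousOn.intervalIntegrable
      rw [huIcc]; exact hf.mul hg
    -- IBP instances
    have IBP : ∀ i j : ℕ, i < 4 → j < 4 →
        (∫ x in (0:ℝ)..1, (D (i+1) x * D j x + D i x * D (j+1) x)) =
          D i 1 * D j 1 - D i 0 * D j 0 := by
      intro i j hi hj
      apply integral_deriv_mul_eq_sub_of_hasDerivWithinAt
      · intro x hx; rw [huIcc] at hx ⊢; exact hDd i hi x hx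
      · intro x hx; rw [huIcc] at hx ⊢; exact hDd j hj x hx
      · exact (ContinuousOn.intervalIntegrable (by rw [huIcc]; exact hDc (i+1) (by omega)))
      · exact (ContinuousOn.intervalIntegrable (by rw [huIcc]; exact hDc (j+1) (by omega)))
    set A := ∫ x in (0:ℝ)..1, (D 2 x)^2 with hA
    set B := ∫ x in (0:ℝ)..1, (D 1 x)^2 with hB
    set C := ∫ x in (0:ℝ)..1, (u x)^2 with hC
    have hsq : ∀ i : ℕ, i ≤ 4 → (∫ x in (0:ℝ)..1, D i x * D i x) = ∫ x in (0:ℝ)..1, (D i x)^2 := by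
      intro i hi; apply intervalIntegral.integral_congr; intro x hx; ring
    have E1 : (∫ x in (0:ℝ)..1, (D 4 x * D 0 x + D 3 x * D 1 x)) = 0 := by
      rw [IBP 3 0 (by norm_num) (by norm_num)]
      simp [hD0, hbc0, hbc1]
    have E2 : (∫ x in (0:ℝ)..1, (D 3 x * D 1 x + D 2 x * D 2 x)) = 0 := by
      rw [IBP 2 1 (by norm_num) (by norm_num)]
      simp [hD]  -- D 2 1 = 0, D 2 0 = 0
      simp [hbc2, hbc3]
    have E3 : (∫ x in (0:ℝ)..1, (D 2 x * D 0 x + D 1 x * D 1 x)) = 0 := by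
      rw [IBP 1 0 (by norm_num) (by norm_num)]
      simp [hD0, hbc0, hbc1]
    have hsplit : ∀ f g : ℝ → ℝ, ContinuousOn f I → ContinuousOn g I →
        (∫ x in (0:ℝ)..1, (f x * g x + f x * g x)) = 0 → True := fun _ _ _ _ _ => trivial
    -- split the IBP identities
    have hadd : ∀ f g : ℝ → ℝ, ContinuousOn f I → ContinuousOn g I →
        (∫ x in (0:ℝ)..1, (f x + g x)) = (∫ x in (0:ℝ)..1, f x) + ∫ x in (0:ℝ)..1, g x := by
      intro f g hf hg
      apply intervalIntegral.integral_add
      · exact ContinuousOn.intervalIntegrable (by rw [huIcc]; exact hf)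
      · exact ContinuousOn.intervalIntegrable (by rw [huIcc]; exact hg)
    have hc40 : ContinuousOn (fun x => D 4 x * D 0 x) I := (hDc 4 le_rfl).mul (hDc 0 (by norm_num))
    have hc31 : ContinuousOn (fun x => D 3 x * D 1 x) I := (hDc 3 (by norm_num)).mul (hDc 1 (by norm_num))
    have hc22 : ContinuousOn (fun x => D 2 x * D 2 x) I := (hDc 2 (by norm_num)).mul (hDc 2 (by norm_num))
    have hc20 : ContinuousOn (fun x => D 2 x * D 0 x) I := (hDc 2 (by norm_num)).mul (hDc 0 (by norm_num))
    have hc11 : ContinuousOn (fun x => D 1 x * D 1 x) I := (hDc 1 (by norm_num)).mul (hDc 1 (by norm_num))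
    rw [hadd _ _ hc40 hc31] at E1
    rw [hadd _ _ hc31 hc22, hsq 2 (by norm_num)] at E2
    rw [hadd _ _ hc20 hc11, hsq 1 (by norm_num)] at E3
    have h40 : (∫ x in (0:ℝ)..1, D 4 x * D 0 x) = A := by rw [hA]; linarith
    have h20 : (∫ x in (0:ℝ)..1, D 2 x * D 0 x) = -B := by rw [hB]; linarith
    have hCC : (∫ x in (0:ℝ)..1, D 0 x * D 0 x) = C := by
      rw [hC]
      apply intervalIntegral.integral_congr
      intro x hx; simp only [hD0]; ring
    -- main energy identity
    have E0 : A + h * B + k * C = 0 := by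
      have hz : (∫ x in (0:ℝ)..1, (D 4 x * D 0 x - h * (D 2 x * D 0 x) + k * (D 0 x * D 0 x))) = 0 := by
        have hcongr : EqOn (fun x => D 4 x * D 0 x - h * (D 2 x * D 0 x) + k * (D 0 x * D 0 x))
            (fun _ => (0:ℝ)) (uIcc (0:ℝ) 1) := by
          intro x hx
          rw [huIcc] at hx
          have h4 : D 4 x - h * D 2 x + k * u x = 0 := heq x hx
          simp only [hD0]
          linear_combination u x * h4
        rw [intervalIntegral.integral_congr hcongr]
        simp
      have hc2 : ContinuousOn (fun x => h * (D 2 x * D 0 x)) I := (continuousOn_const.mul hc20 : ContinuousOn (fun x => h * (D 2 x * D 0 x)) I)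
      have hc3 : ContinuousOn (fun x => k * (D 0 x * D 0 x)) I :=
        (continuousOn_const.mul ((hDc 0 (by norm_num)).mul (hDc 0 (by norm_num))) : ContinuousOn (fun x => k * (D 0 x * D 0 x)) I)
      have e1 : (∫ x in (0:ℝ)..1, (D 4 x * D 0 x - h * (D 2 x * D 0 x))) =
          (∫ x in (0:ℝ)..1, D 4 x * D 0 x) - ∫ x in (0:ℝ)..1, h * (D 2 x * D 0 x) := by
        apply intervalIntegral.integral_sub
        · exact ContinuousOn.intervalIntegrable (by rw [huIcc]; exact hc40)
        · exact ContinuousOn.intervalIntegrable (by rw [huIcc]; exact hc2)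
      have e2 : (∫ x in (0:ℝ)..1, (D 4 x * D 0 x - h * (D 2 x * D 0 x) + k * (D 0 x * D 0 x))) =
          (∫ x in (0:ℝ)..1, (D 4 x * D 0 x - h * (D 2 x * D 0 x))) +
            ∫ x in (0:ℝ)..1, k * (D 0 x * D 0 x) := by
        apply intervalIntegral.integral_add
        · apply ContinuousOn.intervalIntegrable
          rw [huIcc]; exact hc40.sub hc2
        · exact ContinuousOn.intervalIntegrable (by rw [huIcc]; exact hc3)
      rw [e2, e1, intervalIntegral.integral_const_mul, intervalIntegral.integral_const_mul,
        h40, h20, hCC] at hz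
      linarith
    -- positivity
    have hC0 : 0 < C := by
      obtain ⟨x₀, hx₀, hux₀⟩ := hne
      exact sq_int_pos (hreg.continuousOn) hx₀ hux₀
    have hB0 : 0 < B := by
      by_cases hd1 : ∀ x ∈ Ico (0:ℝ) 1, D 1 x = 0
      · exfalso
        obtain ⟨x₀, hx₀, hux₀⟩ := hne
        have hconst : ∀ x ∈ I, u x = u 0 := by
          apply constant_of_derivWithin_zero (hreg.differentiableOn (by norm_num))
          intro x hx
          have := hd1 x hx
          rw [show D 1 x = derivWithin u I x from congrFun iteratedDerivWithin_one x] at this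
          exact this
        exact hux₀ (by rw [hconst x₀ hx₀, hbc0])
      · push_neg at hd1
        obtain ⟨x₁, hx₁, hd⟩ := hd1
        exact sq_int_pos (hDc 1 (by norm_num)) (mem_Icc_of_Ico hx₁) hd
    -- Cauchy-Schwarz via quadratic
    have hCS : B^2 ≤ A * C := by
      have hquad : ∀ t : ℝ, 0 ≤ A - 2 * t * B + t^2 * C := by
        intro t
        have hnn : 0 ≤ ∫ x in (0:ℝ)..1, (D 2 x + t * D 0 x)^2 :=
          intervalIntegral.integral_nonneg zero_le_one (fun x _ => sq_nonneg _)
        have hexp : (∫ x in (0:ℝ)..1, (D 2 x + t * D 0 x)^2) =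
            A + 2 * t * (∫ x in (0:ℝ)..1, D 2 x * D 0 x) + t^2 * C := by
          have e : (∫ x in (0:ℝ)..1, (D 2 x + t * D 0 x)^2) =
              (∫ x in (0:ℝ)..1, ((D 2 x)^2 + (2 * t) * (D 2 x * D 0 x) + t^2 * (D 0 x * D 0 x))) := by
            apply intervalIntegral.integral_congr; intro x hx; ring
          have hc3t : ContinuousOn (fun x => t^2 * (D 0 x * D 0 x)) I :=
            (continuousOn_const.mul ((hDc 0 (by norm_num)).mul (hDc 0 (by norm_num))) : ContinuousOn (fun x => t^2 * (D 0 x * D 0 x)) I)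
          rw [e]
          rw [hadd (fun x => D 2 x ^ 2 + 2 * t * (D 2 x * D 0 x)) (fun x => t ^ 2 * (D 0 x * D 0 x)) (((hDc 2 (by norm_num)).pow 2).add ((continuousOn_const.mul hc20 : ContinuousOn (fun x => (2*t) * (D 2 x * D 0 x)) I))) hc3t]
          rw [hadd (fun x => D 2 x ^ 2) (fun x => 2 * t * (D 2 x * D 0 x)) ((hDc 2 (by norm_num)).pow 2) ((continuousOn_const.mul hc20 : ContinuousOn (fun x => (2*t) * (D 2 x * D 0 x)) I))]
          rw [intervalIntegral.integral_const_mul, intervalIntegral.integral_const_mul, hCC, hA]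
          try ring
        rw [hexp, h20] at hnn
        linarith
      have hq := hquad (B / C)
      have hC' : C ≠ 0 := ne_of_gt hC0
      have e2 : A - 2*(B/C)*B + (B/C)^2*C = A - B^2/C := by field_simp; ring
      rw [e2] at hq
      have hle : B^2/C ≤ A := by linarith
      calc B^2 = B^2/C*C := by field_simp
      _ ≤ A*C := mul_le_mul_of_nonneg_right hle hC0.le
    have hs0 : 0 ≤ Real.sqrt k := Real.sqrt_nonneg k
    have hs : Real.sqrt k ^ 2 = k := Real.sq_sqrt hk.le
    set s := Real.sqrt k with hsdef
    have E0C : A*C + h*(B*C) + s^2*C^2 = 0 := by linear_combination C * E0 + C^2 * hs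
    have key : (h + 2*s) * (B*C) ≤ 0 := by nlinarith [sq_nonneg (B - s*C), hCS, E0C]
    have h2 : h + 2*s ≤ 0 := by
      by_contra hpos
      push_neg at hpos
      nlinarith [mul_pos hB0 hC0]
    linarith
  -- roots of the characteristic polynomial
  have hsk : 0 < Real.sqrt k := Real.sqrt_pos.mpr hk
  have hh0 : h < 0 := by
    have : 0 < 2 * Real.sqrt k := by positivity
    linarith
  have hdisc : 0 ≤ h^2 - 4*k := by
    have h2 : 2*Real.sqrt k ≤ -h := by linarith
    have h3 := mul_self_le_mul_self (by positivity : (0:ℝ) ≤ 2*Real.sqrt k) h2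
    have h4 : Real.sqrt k * Real.sqrt k = k := Real.mul_self_sqrt hk.le
    nlinarith [h3, h4]
  set dd := Real.sqrt (h^2 - 4*k) with hdddef
  have hd2 : dd^2 = h^2 - 4*k := Real.sq_sqrt hdisc
  have hd0 : 0 ≤ dd := Real.sqrt_nonneg _
  have hdlt : dd < -h := by
    by_contra hcon
    push_neg at hcon
    have h3 : (-h)*(-h) ≤ dd*dd := mul_self_le_mul_self (by linarith) hcon
    nlinarith [hd2]
  have hμ₁pos : 0 < (-h - dd)/2 := by linarith
  have hμ₂pos : 0 < (-h + dd)/2 := by linarith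
  set ω₁ := Real.sqrt ((-h - dd)/2) with hω₁def
  set ω₂ := Real.sqrt ((-h + dd)/2) with hω₂def
  have hω₁sq : ω₁^2 = (-h - dd)/2 := Real.sq_sqrt hμ₁pos.le
  have hω₂sq : ω₂^2 = (-h + dd)/2 := Real.sq_sqrt hμ₂pos.le
  have hω₁pos : 0 < ω₁ := Real.sqrt_pos.mpr hμ₁pos
  have hω₂pos : 0 < ω₂ := Real.sqrt_pos.mpr hμ₂pos
  have hroot : ∀ μ : ℝ, μ^2 + h*μ + k = 0 ↔ (μ = ω₁^2 ∨ μ = ω₂^2) := by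
    intro μ
    have hfact : μ^2 + h*μ + k = (μ - ω₁^2) * (μ - ω₂^2) := by
      rw [hω₁sq, hω₂sq]
      linear_combination ((1:ℝ)/4) * hd2
    constructor
    · intro h0
      rw [hfact] at h0
      rcases mul_eq_zero.mp h0 with h0 | h0
      · exact Or.inl (by linarith [sub_eq_zero.mp h0])
      · exact Or.inr (by linarith [sub_eq_zero.mp h0])
    · rintro (h0 | h0) <;> rw [hfact, h0] <;> ring
  have hroot1 : ω₁^4 + h*ω₁^2 + k = 0 := by
    have := (hroot (ω₁^2)).mpr (Or.inl rfl)
    linear_combination this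
  have hroot2 : ω₂^4 + h*ω₂^2 + k = 0 := by
    have := (hroot (ω₂^2)).mpr (Or.inr rfl)
    linear_combination this
  -- the vector solution from u
  set F : ℝ → ℝ×ℝ×ℝ×ℝ := fun t => (u t, D 1 t, D 2 t, D 3 t) with hFdef
  have hFc : ContinuousOn F I := by
    exact (hreg.continuousOn).prodMk ((hDc 1 (by norm_num)).prodMk
      ((hDc 2 (by norm_num)).prodMk (hDc 3 (by norm_num))))
  have hF' : ∀ t ∈ Ico (0:ℝ) 1, HasDerivWithinAt F
      ((F t).2.1, (F t).2.2.1, (F t).2.2.2, h * (F t).2.2.1 - k * (F t).1) (Ici t) t := by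
    intro t ht
    have htI : t ∈ I := mem_Icc_of_Ico ht
    have hmemI : I ∈ nhdsWithin t (Ici t) := by
      apply Filter.mem_of_superset (inter_mem_nhdsWithin (Ici t) (Iic_mem_nhds ht.2))
      rintro y ⟨hy1, hy2⟩
      exact ⟨le_trans ht.1 hy1, hy2⟩
    have hd0' : HasDerivWithinAt u (D 1 t) (Ici t) t := by
      have h0 := (hDd 0 (by norm_num) t htI).mono_of_mem_nhdsWithin hmemI
      exact h0.congr (fun y _ => (hD0 y).symm) (hD0 t).symm
    have hd1' := (hDd 1 (by norm_num) t htI).mono_of_mem_nhdsWithin hmemI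
    have hd2' := (hDd 2 (by norm_num) t htI).mono_of_mem_nhdsWithin hmemI
    have hd3' : HasDerivWithinAt (D 3) (h * D 2 t - k * u t) (Ici t) t := by
      have h4 : D 4 t = h * D 2 t - k * u t := by
        have := heq t htI
        have hDeq : D 4 t - h * D 2 t + k * u t = 0 := this
        linarith
      rw [← h4]
      exact (hDd 3 (by norm_num) t htI).mono_of_mem_nhdsWithin hmemI
    exact hd0'.prodMk (hd1'.prodMk (hd2'.prodMk hd3'))
  have h1I : (1:ℝ) ∈ I := by constructor <;> norm_num
  -- case split on double vs distinct root
  rcases eq_or_ne dd 0 with hdz | hdz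
  · -- double root case : ω₁ = ω₂
    have hhω : h = -2 * ω₁^2 := by rw [hω₁sq, hdz]; ring
    have hkω : k = ω₁^4 := by linear_combination hroot1 - ω₁^2 * hhω
    set c₁ := D 1 0 with hc₁
    set c₃ := D 3 0 with hc₃
    set A := (3*c₁*ω₁^2 + c₃)/(2*ω₁^3) with hAdef
    set B := c₁ - A*ω₁ with hBdef
    set G : ℝ → ℝ×ℝ×ℝ×ℝ := fun t =>
      (A*Real.sin (ω₁*t) + B*(t*Real.cos (ω₁*t)),
       (A*ω₁ + B)*Real.cos (ω₁*t) - B*ω₁*(t*Real.sin (ω₁*t)),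
       -((A*ω₁^2 + 2*B*ω₁)*Real.sin (ω₁*t)) - B*ω₁^2*(t*Real.cos (ω₁*t)),
       -((A*ω₁^3 + 3*B*ω₁^2)*Real.cos (ω₁*t)) + B*ω₁^3*(t*Real.sin (ω₁*t))) with hGdef
    have hGc : ContinuousOn G I := by
      apply Continuous.continuousOn
      fun_prop
    have hG' : ∀ t ∈ Ico (0:ℝ) 1, HasDerivWithinAt G
        ((G t).2.1, (G t).2.2.1, (G t).2.2.2, h * (G t).2.2.1 - k * (G t).1) (Ici t) t := by
      intro t _
      apply HasDerivAt.hasDerivWithinAt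
      have h1 : HasDerivAt (fun x => A*Real.sin (ω₁*x) + B*(x*Real.cos (ω₁*x)))
          ((A*ω₁ + B)*Real.cos (ω₁*t) - B*ω₁*(t*Real.sin (ω₁*t))) t := by
        have := ((hasDerivAt_sin_mul ω₁ t).const_mul A).add ((hasDerivAt_mul_cos ω₁ t).const_mul B)
        refine this.congr_deriv ?_
        ring
      have h2 : HasDerivAt (fun x => (A*ω₁ + B)*Real.cos (ω₁*x) - B*ω₁*(x*Real.sin (ω₁*x)))
          (-((A*ω₁^2 + 2*B*ω₁)*Real.sin (ω₁*t)) - B*ω₁^2*(t*Real.cos (ω₁*t))) t := by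
        have := ((hasDerivAt_cos_mul ω₁ t).const_mul (A*ω₁ + B)).sub
          ((hasDerivAt_mul_sin ω₁ t).const_mul (B*ω₁))
        refine this.congr_deriv ?_
        ring
      have h3 : HasDerivAt (fun x => -((A*ω₁^2 + 2*B*ω₁)*Real.sin (ω₁*x)) - B*ω₁^2*(x*Real.cos (ω₁*x)))
          (-((A*ω₁^3 + 3*B*ω₁^2)*Real.cos (ω₁*t)) + B*ω₁^3*(t*Real.sin (ω₁*t))) t := by
        have := (((hasDerivAt_sin_mul ω₁ t).const_mul (A*ω₁^2 + 2*B*ω₁)).neg).sub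
          ((hasDerivAt_mul_cos ω₁ t).const_mul (B*ω₁^2))
        refine this.congr_deriv ?_
        ring
      have h4 : HasDerivAt (fun x => -((A*ω₁^3 + 3*B*ω₁^2)*Real.cos (ω₁*x)) + B*ω₁^3*(x*Real.sin (ω₁*x)))
          (h * (-((A*ω₁^2 + 2*B*ω₁)*Real.sin (ω₁*t)) - B*ω₁^2*(t*Real.cos (ω₁*t)))
            - k * (A*Real.sin (ω₁*t) + B*(t*Real.cos (ω₁*t)))) t := by
        have := (((hasDerivAt_cos_mul ω₁ t).const_mul (A*ω₁^3 + 3*B*ω₁^2)).neg).add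
          ((hasDerivAt_mul_sin ω₁ t).const_mul (B*ω₁^3))
        refine this.congr_deriv ?_
        rw [hhω, hkω]
        ring
      exact h1.prodMk (h2.prodMk (h3.prodMk h4))
    have hG0 : F 0 = G 0 := by
      have hG0v : G 0 = (0, A*ω₁ + B, 0, -(A*ω₁^3 + 3*B*ω₁^2)) := by
        rw [hGdef]
        norm_num
      have hF0v : F 0 = (0, c₁, 0, c₃) := by
        have hb2 : D 2 0 = 0 := hbc2
        rw [hFdef]
        simp only [hbc0, hb2]
        rfl
      rw [hF0v, hG0v]
      have e1 : A*ω₁ + B = c₁ := by rw [hBdef]; ring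
      have e3 : -(A*ω₁^3 + 3*B*ω₁^2) = c₃ := by
        rw [hBdef, hAdef]
        field_simp
        ring
      rw [e1, e3]
    have hEq := ode4_unique h k F G hFc hF' hGc hG' hG0
    have hu' : ∀ x ∈ I, u x = A*Real.sin (ω₁*x) + B*(x*Real.cos (ω₁*x)) :=
      fun x hx => congrArg Prod.fst (hEq hx)
    have hu2 : ∀ x ∈ I, D 2 x = -((A*ω₁^2 + 2*B*ω₁)*Real.sin (ω₁*x)) - B*ω₁^2*(x*Real.cos (ω₁*x)) :=
      fun x hx => congrArg (fun p => p.2.2.1) (hEq hx)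
    have e1 : A*Real.sin ω₁ + B*Real.cos ω₁ = 0 := by
      have := (hu' 1 h1I).symm.trans hbc1
      simpa using this
    have e2 : -((A*ω₁^2 + 2*B*ω₁)*Real.sin ω₁) - B*ω₁^2*Real.cos ω₁ = 0 := by
      have := (hu2 1 h1I).symm.trans hbc3
      simpa using this
    have hB0 : B = 0 := by
      have hz : B * Real.sin ω₁ * (-2*ω₁) = 0 := by linear_combination ω₁^2 * e1 + e2
      have hBs1 : B * Real.sin ω₁ = 0 := by
        rcases mul_eq_zero.mp hz with hz | hz
        · exact hz
        · exact absurd hz (by intro hc; nlinarith)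
      rcases mul_eq_zero.mp hBs1 with hB | hsin
      · exact hB
      · -- sin ω₁ = 0, so cos ω₁ = ±1 ≠ 0, and e1 forces B = 0
        have hcos : Real.cos ω₁ ≠ 0 := by
          intro hc
          have := Real.sin_sq_add_cos_sq ω₁
          rw [hsin, hc] at this
          norm_num at this
        have : B * Real.cos ω₁ = 0 := by
          have := e1
          rw [hsin] at this
          linarith [this]
        exact (mul_eq_zero.mp this).resolve_right hcos
    have hu'' : ∀ x ∈ I, u x = A * Real.sin (ω₁*x) + 0 * Real.sin (ω₂*x) := by
      intro x hx
      rw [hu' x hx, hB0]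
      ring
    have hAs : A * Real.sin ω₁ = 0 := by
      have := e1
      rw [hB0] at this
      linarith
    obtain ⟨p1, p2, p3, p4⟩ := final_part k h hk u hne ω₁ ω₂ A 0 hω₁pos hω₂pos hroot hu'' hAs (by ring)
    exact ⟨hple, p1, p2, p3, p4⟩
  · -- distinct roots
    have hsqne : ω₂^2 - ω₁^2 ≠ 0 := by
      rw [hω₁sq, hω₂sq]
      intro hc
      exact hdz (by linarith)
    set c₁ := D 1 0 with hc₁
    set c₃ := D 3 0 with hc₃
    set A := (c₁*ω₂^2 + c₃)/(ω₁*(ω₂^2 - ω₁^2)) with hAdef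
    set B := -(c₁*ω₁^2 + c₃)/(ω₂*(ω₂^2 - ω₁^2)) with hBdef
    have hA1 : A*ω₁ + B*ω₂ = c₁ := by
      rw [hAdef, hBdef]
      field_simp
      ring
    have hA3 : -(A*ω₁^3) - B*ω₂^3 = c₃ := by
      rw [hAdef, hBdef]
      field_simp
      ring
    set G : ℝ → ℝ×ℝ×ℝ×ℝ := fun t =>
      (A*Real.sin (ω₁*t) + B*Real.sin (ω₂*t),
       A*ω₁*Real.cos (ω₁*t) + B*ω₂*Real.cos (ω₂*t),
       -(A*ω₁^2*Real.sin (ω₁*t)) - B*ω₂^2*Real.sin (ω₂*t),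
       -(A*ω₁^3*Real.cos (ω₁*t)) - B*ω₂^3*Real.cos (ω₂*t)) with hGdef
    have hGc : ContinuousOn G I := by
      apply Continuous.continuousOn
      fun_prop
    have hG' : ∀ t ∈ Ico (0:ℝ) 1, HasDerivWithinAt G
        ((G t).2.1, (G t).2.2.1, (G t).2.2.2, h * (G t).2.2.1 - k * (G t).1) (Ici t) t := by
      intro t _
      apply HasDerivAt.hasDerivWithinAt
      have h1 : HasDerivAt (fun x => A*Real.sin (ω₁*x) + B*Real.sin (ω₂*x))
          (A*ω₁*Real.cos (ω₁*t) + B*ω₂*Real.cos (ω₂*t)) t := by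
        have := ((hasDerivAt_sin_mul ω₁ t).const_mul A).add ((hasDerivAt_sin_mul ω₂ t).const_mul B)
        refine this.congr_deriv ?_
        ring
      have h2 : HasDerivAt (fun x => A*ω₁*Real.cos (ω₁*x) + B*ω₂*Real.cos (ω₂*x))
          (-(A*ω₁^2*Real.sin (ω₁*t)) - B*ω₂^2*Real.sin (ω₂*t)) t := by
        have := ((hasDerivAt_cos_mul ω₁ t).const_mul (A*ω₁)).add
          ((hasDerivAt_cos_mul ω₂ t).const_mul (B*ω₂))
        refine this.congr_deriv ?_
        ring
      have h3 : HasDerivAt (fun x => -(A*ω₁^2*Real.sin (ω₁*x)) - B*ω₂^2*Real.sin (ω₂*x))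
          (-(A*ω₁^3*Real.cos (ω₁*t)) - B*ω₂^3*Real.cos (ω₂*t)) t := by
        have := (((hasDerivAt_sin_mul ω₁ t).const_mul (A*ω₁^2)).neg).sub
          ((hasDerivAt_sin_mul ω₂ t).const_mul (B*ω₂^2))
        refine this.congr_deriv ?_
        ring
      have h4 : HasDerivAt (fun x => -(A*ω₁^3*Real.cos (ω₁*x)) - B*ω₂^3*Real.cos (ω₂*x))
          (h * (-(A*ω₁^2*Real.sin (ω₁*t)) - B*ω₂^2*Real.sin (ω₂*t))
            - k * (A*Real.sin (ω₁*t) + B*Real.sin (ω₂*t))) t := by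
        have := (((hasDerivAt_cos_mul ω₁ t).const_mul (A*ω₁^3)).neg).sub
          ((hasDerivAt_cos_mul ω₂ t).const_mul (B*ω₂^3))
        refine this.congr_deriv (Eq.symm ?_)
        linear_combination (-(A*Real.sin (ω₁*t))) * hroot1 + (-(B*Real.sin (ω₂*t))) * hroot2
      exact h1.prodMk (h2.prodMk (h3.prodMk h4))
    have hG0 : F 0 = G 0 := by
      have hG0v : G 0 = (0, A*ω₁ + B*ω₂, 0, -(A*ω₁^3) - B*ω₂^3) := by
        rw [hGdef]
        norm_num
      have hF0v : F 0 = (0, c₁, 0, c₃) := by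
        have hb2 : D 2 0 = 0 := hbc2
        rw [hFdef]
        simp only [hbc0, hb2]
        rfl
      rw [hF0v, hG0v, hA1, hA3]
    have hEq := ode4_unique h k F G hFc hF' hGc hG' hG0
    have hu' : ∀ x ∈ I, u x = A*Real.sin (ω₁*x) + B*Real.sin (ω₂*x) :=
      fun x hx => congrArg Prod.fst (hEq hx)
    have hu2 : ∀ x ∈ I, D 2 x = -(A*ω₁^2*Real.sin (ω₁*x)) - B*ω₂^2*Real.sin (ω₂*x) :=
      fun x hx => congrArg (fun p => p.2.2.1) (hEq hx)
    have e1 : A*Real.sin ω₁ + B*Real.sin ω₂ = 0 := by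
      have := (hu' 1 h1I).symm.trans hbc1
      simpa using this
    have e2 : -(A*ω₁^2*Real.sin ω₁) - B*ω₂^2*Real.sin ω₂ = 0 := by
      have := (hu2 1 h1I).symm.trans hbc3
      simpa using this
    have hBs : B * Real.sin ω₂ = 0 := by
      have hz : (B * Real.sin ω₂) * (ω₁^2 - ω₂^2) = 0 := by
        linear_combination ω₁^2 * e1 + e2
      rcases mul_eq_zero.mp hz with hz | hz
      · exact hz
      · exact absurd (by linarith : ω₂^2 - ω₁^2 = 0) hsqne
    have hAs : A * Real.sin ω₁ = 0 := by linear_combination e1 - hBs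
    obtain ⟨p1, p2, p3, p4⟩ := final_part k h hk u hne ω₁ ω₂ A B hω₁pos hω₂pos hroot hu' hAs hBs
    exact ⟨hple, p1, p2, p3, p4⟩
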